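/- Let V₁, V₂: ℝ → [0,∞) be Orlicz functions such that ∫_ℝ V₁(x) e^{αV₂(x)} dx < ∞ for all α ∈ (-∞,0). Then the map α ↦ (∫_ℝ V₁(x) e^{αV₂(x)} dx) / (∫_ℝ e^{αV₂(x)} dx) is monotone increasing on (-∞,0); i.e., for -∞ < α₁ ≤ α₂ < 0, m_{V₁}(μ_{V₂,α₁}) ≤ m_{V₁}(μ_{V₂,α₂}). -/

import Mathlib

open MeasureTheory Real Filter Topology ENNReal

noncomputable section

/-- An Orlicz function: convex, symmetric, vanishing only at `0`, nonnegative. -/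
def IsOrlicz (V : ℝ → ℝ) : Prop :=
  ConvexOn ℝ Set.univ V ∧ (∀ x, V (-x) = V x) ∧ V 0 = 0 ∧ (∀ x, x ≠ 0 → 0 < V x) ∧
    (∀ x, 0 ≤ V x)

lemma IsOrlicz.continuous {V : ℝ → ℝ} (hV : IsOrlicz V) : Continuous V := by
  have := hV.1.continuousOn (isOpen_univ)
  exact continuousOn_univ.mp this

lemma IsOrlicz.mono {V : ℝ → ℝ} (hV : IsOrlicz V) {x y : ℝ} (h : |x| ≤ |y|) :
    V x ≤ V y := by
  obtain ⟨hconv, hsymm, h0, _, hnn⟩ := hV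
  have habs : ∀ z : ℝ, V z = V |z| := by
    intro z
    rcases le_or_gt 0 z with hz | hz
    · rw [abs_of_nonneg hz]
    · rw [abs_of_neg hz, hsymm]
  rw [habs x, habs y]
  set s := |x| with hs
  set t := |y| with ht
  have hs0 : 0 ≤ s := abs_nonneg x
  rcases eq_or_lt_of_le (hs0.trans h) with hteq | htpos
  · have : s = 0 := le_antisymm (h.trans hteq.symm.le) hs0
    rw [this, ← hteq]
  · have ha : (0:ℝ) ≤ 1 - s/t := by
      have : s / t ≤ 1 := (div_le_one htpos).mpr h
      linarith
    have hb : (0:ℝ) ≤ s/t := div_nonneg hs0 htpos.le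
    have hab : (1 - s/t) + s/t = 1 := by ring
    have key := hconv.2 (Set.mem_univ (0:ℝ)) (Set.mem_univ t) ha hb hab
    simp only [smul_eq_mul, mul_zero, zero_add, h0, mul_zero] at key
    have hst : s / t * t = s := div_mul_cancel₀ s htpos.ne'
    rw [hst] at key
    calc V s ≤ s / t * V t := key
      _ ≤ 1 * V t := by
          apply mul_le_mul_of_nonneg_right _ (hnn t)
          exact (div_le_one htpos).mpr h
      _ = V t := one_mul _

lemma exp_integrable (V₁ V₂ : ℝ → ℝ) (hV₁ : IsOrlicz V₁) (hV₂ : IsOrlicz V₂)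
    (hint : ∀ α : ℝ, α < 0 → Integrable (fun x : ℝ => V₁ x * Real.exp (α * V₂ x)))
    {α : ℝ} (hα : α < 0) : Integrable (fun x : ℝ => Real.exp (α * V₂ x)) := by
  have hc : 0 < V₁ 1 := hV₁.2.2.2.1 1 one_ne_zero
  have hg : Integrable (fun x : ℝ =>
      Set.indicator (Set.Icc (-1:ℝ) 1) (fun _ => (1:ℝ)) x
        + (V₁ 1)⁻¹ * (V₁ x * Real.exp (α * V₂ x))) := by
    apply Integrable.add
    · have : IntegrableOn (fun _ : ℝ => (1:ℝ)) (Set.Icc (-1) 1) :=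
        integrableOn_const measure_Icc_lt_top.ne
      exact this.integrable_indicator measurableSet_Icc
    · exact (hint α hα).const_mul _
  refine hg.mono' ?_ ?_
  · exact ((continuous_const.mul hV₂.continuous).rexp).aestronglyMeasurable
  · refine Filter.Eventually.of_forall fun x => ?_
    rw [Real.norm_eq_abs, abs_of_pos (Real.exp_pos _)]
    rcases le_or_gt (|x|) 1 with hx | hx
    · have h1 : Real.exp (α * V₂ x) ≤ 1 := by
        rw [Real.exp_le_one_iff]
        nlinarith [hV₂.2.2.2.2 x]
      have h2 : Set.indicator (Set.Icc (-1:ℝ) 1) (fun _ => (1:ℝ)) x = 1 := by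
        rw [Set.indicator_of_mem]
        rw [Set.mem_Icc]
        constructor <;> [linarith [neg_abs_le x]; linarith [le_abs_self x]]
      have h3 : 0 ≤ (V₁ 1)⁻¹ * (V₁ x * Real.exp (α * V₂ x)) := by
        have := hV₁.2.2.2.2 x
        positivity
      rw [h2]
      linarith
    · have h1 : V₁ 1 ≤ V₁ x := hV₁.mono (by rw [abs_one]; exact hx.le)
      have h2 : Real.exp (α * V₂ x) ≤ (V₁ 1)⁻¹ * (V₁ x * Real.exp (α * V₂ x)) := by
        rw [← mul_assoc]
        nth_rewrite 1 [← one_mul (Real.exp (α * V₂ x))]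
        apply mul_le_mul_of_nonneg_right _ (Real.exp_pos _).le
        rw [← div_eq_inv_mul, le_div_iff₀ hc]
        linarith
      have h3 : 0 ≤ Set.indicator (Set.Icc (-1:ℝ) 1) (fun _ => (1:ℝ)) x := by
        apply Set.indicator_nonneg
        intro _ _; norm_num
      linarith

/-- The map `α ↦ m_{V₁}(μ_{V₂,α}) = ∫ V₁ e^{αV₂} / ∫ e^{αV₂}` is monotone increasing
on `(-∞,0)`. -/
theorem stmt14 (V₁ V₂ : ℝ → ℝ) (hV₁ : IsOrlicz V₁) (hV₂ : IsOrlicz V₂)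
    (hint : ∀ α : ℝ, α < 0 → Integrable (fun x : ℝ => V₁ x * Real.exp (α * V₂ x))) :
    ∀ α₁ α₂ : ℝ, α₁ ≤ α₂ → α₂ < 0 →
      (∫ x : ℝ, V₁ x * Real.exp (α₁ * V₂ x)) / (∫ x : ℝ, Real.exp (α₁ * V₂ x))
        ≤ (∫ x : ℝ, V₁ x * Real.exp (α₂ * V₂ x)) / (∫ x : ℝ, Real.exp (α₂ * V₂ x)) := by
  intro a b hab hb0
  have ha0 : a < 0 := lt_of_le_of_lt hab hb0
  have hIa : Integrable (fun x : ℝ => Real.exp (a * V₂ x)) :=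
    exp_integrable V₁ V₂ hV₁ hV₂ hint ha0
  have hIb : Integrable (fun x : ℝ => Real.exp (b * V₂ x)) :=
    exp_integrable V₁ V₂ hV₁ hV₂ hint hb0
  have hVa : Integrable (fun x : ℝ => V₁ x * Real.exp (a * V₂ x)) := hint a ha0
  have hVb : Integrable (fun x : ℝ => V₁ x * Real.exp (b * V₂ x)) := hint b hb0
  set A₁ := ∫ x : ℝ, Real.exp (a * V₂ x) with hA₁
  set A₂ := ∫ x : ℝ, Real.exp (b * V₂ x) with hA₂
  set B₁ := ∫ x : ℝ, V₁ x * Real.exp (a * V₂ x) with hB₁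
  set B₂ := ∫ x : ℝ, V₁ x * Real.exp (b * V₂ x) with hB₂
  have hA₁pos : 0 < A₁ := integral_exp_pos hIa
  have hA₂pos : 0 < A₂ := integral_exp_pos hIb
  rw [div_le_div_iff₀ hA₁pos hA₂pos]
  -- key inequality: B₁ * A₂ ≤ B₂ * A₁
  -- consider g x y = (V₁ x - V₁ y) * (exp(b V₂ x) exp(a V₂ y) - exp(a V₂ x) exp(b V₂ y))
  have hg_nonneg : ∀ x y : ℝ, 0 ≤ (V₁ x - V₁ y) *
      (Real.exp (b * V₂ x) * Real.exp (a * V₂ y)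
        - Real.exp (a * V₂ x) * Real.exp (b * V₂ y)) := by
    intro x y
    rw [← Real.exp_add, ← Real.exp_add]
    rcases le_total (|y|) (|x|) with h | h
    · apply mul_nonneg
      · linarith [hV₁.mono h]
      · have h2 : V₂ y ≤ V₂ x := hV₂.mono h
        have : a * V₂ x + b * V₂ y ≤ b * V₂ x + a * V₂ y := by nlinarith
        linarith [Real.exp_le_exp.mpr this]
    · have h1 : V₁ x - V₁ y ≤ 0 := by linarith [hV₁.mono h]
      have h2 : V₂ x ≤ V₂ y := hV₂.mono h
      have h3 : b * V₂ x + a * V₂ y ≤ a * V₂ x + b * V₂ y := by nlinarith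
      have h4 := Real.exp_le_exp.mpr h3
      nlinarith
  -- inner integral
  have hinner : ∀ x : ℝ, (∫ y : ℝ, (V₁ x - V₁ y) *
      (Real.exp (b * V₂ x) * Real.exp (a * V₂ y)
        - Real.exp (a * V₂ x) * Real.exp (b * V₂ y)))
      = V₁ x * Real.exp (b * V₂ x) * A₁ - V₁ x * Real.exp (a * V₂ x) * A₂
        - Real.exp (b * V₂ x) * B₁ + Real.exp (a * V₂ x) * B₂ := by
    intro x
    have e1 : (fun y : ℝ => (V₁ x - V₁ y) *
        (Real.exp (b * V₂ x) * Real.exp (a * V₂ y)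
          - Real.exp (a * V₂ x) * Real.exp (b * V₂ y)))
        = fun y : ℝ =>
          ((V₁ x * Real.exp (b * V₂ x)) * Real.exp (a * V₂ y)
            - (V₁ x * Real.exp (a * V₂ x)) * Real.exp (b * V₂ y))
          - (Real.exp (b * V₂ x) * (V₁ y * Real.exp (a * V₂ y))
            - Real.exp (a * V₂ x) * (V₁ y * Real.exp (b * V₂ y))) := by
      funext y; ring
    have i1 := hIa.const_mul (V₁ x * Real.exp (b * V₂ x))
    have i2 := hIb.const_mul (V₁ x * Real.exp (a * V₂ x))
    have i3 := hVa.const_mul (Real.exp (b * V₂ x))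
    have i4 := hVb.const_mul (Real.exp (a * V₂ x))
    have i12 : Integrable (fun y : ℝ =>
        V₁ x * Real.exp (b * V₂ x) * Real.exp (a * V₂ y)
          - V₁ x * Real.exp (a * V₂ x) * Real.exp (b * V₂ y)) := i1.sub i2
    have i34 : Integrable (fun y : ℝ =>
        Real.exp (b * V₂ x) * (V₁ y * Real.exp (a * V₂ y))
          - Real.exp (a * V₂ x) * (V₁ y * Real.exp (b * V₂ y))) := i3.sub i4
    rw [e1, integral_sub i12 i34, integral_sub i1 i2, integral_sub i3 i4,
        integral_const_mul, integral_const_mul, integral_const_mul, integral_const_mul]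
    ring
  have houter : (∫ x : ℝ, (V₁ x * Real.exp (b * V₂ x) * A₁
      - V₁ x * Real.exp (a * V₂ x) * A₂
      - Real.exp (b * V₂ x) * B₁ + Real.exp (a * V₂ x) * B₂))
      = 2 * (B₂ * A₁ - B₁ * A₂) := by
    have j1 := hVb.mul_const A₁
    have j2 := hVa.mul_const A₂
    have j3 := hIb.mul_const B₁
    have j4 := hIa.mul_const B₂
    have j12 : Integrable (fun x : ℝ =>
        V₁ x * Real.exp (b * V₂ x) * A₁ - V₁ x * Real.exp (a * V₂ x) * A₂) := j1.sub j2
    have j123 : Integrable (fun x : ℝ =>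
        V₁ x * Real.exp (b * V₂ x) * A₁ - V₁ x * Real.exp (a * V₂ x) * A₂
          - Real.exp (b * V₂ x) * B₁) := j12.sub j3
    rw [integral_add j123 j4, integral_sub j12 j3, integral_sub j1 j2,
        integral_mul_const, integral_mul_const, integral_mul_const, integral_mul_const]
    ring
  have hkey : 0 ≤ 2 * (B₂ * A₁ - B₁ * A₂) := by
    rw [← houter]
    refine integral_nonneg fun x => ?_
    dsimp only
    rw [← hinner x]
    exact integral_nonneg fun y => hg_nonneg x y
  linarith
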